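/- In any sequence of permutations of an n-element set (n ≥ 2) where consecutive permutations differ by a swap of adjacent elements and each pair of elements swaps exactly once (a half-period of an allowable sequence), the element that is first in the initial permutation ends up last in the final permutation. -/

import Mathlib

theorem swap_val_lt_iff {n : ℕ} (p p1 qx qy : Fin n) (h1 : p1.val = p.val + 1)
    (hne : qx ≠ qy)
    (hbad : ¬ ((qx = p ∧ qy = p1) ∨ (qx = p1 ∧ qy = p))) :
    ((Equiv.swap p p1 qx).val < (Equiv.swap p p1 qy).val) ↔ qx.val < qy.val := by
  have hvne : qx.val ≠ qy.val := fun h => hne (Fin.ext h)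
  have hbadv : ¬ ((qx.val = p.val ∧ qy.val = p1.val) ∨ (qx.val = p1.val ∧ qy.val = p.val)) := by
    simpa [Fin.ext_iff] using hbad
  have hswap : ∀ q : Fin n, ((Equiv.swap p p1) q).val
      = if q = p then p1.val else if q = p1 then p.val else q.val := by
    intro q
    rcases eq_or_ne q p with h | h
    · subst h; simp
    · rcases eq_or_ne q p1 with h2 | h2
      · subst h2; simp [Equiv.swap_apply_right, h]
      · rw [Equiv.swap_apply_of_ne_of_ne h h2]; simp [h, h2]
  rw [hswap qx, hswap qy]
  split_ifs <;> simp_all [Fin.ext_iff] <;> omega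

set_option maxHeartbeats 1000000 in
theorem allowable_half_period_first_to_last_aux (n m : ℕ) (hn : 2 ≤ n)
    (σ : Fin (m + 1) → (Fin n ≃ Fin n))
    (pos : Fin m → Fin n)
    (hpos : ∀ i, (pos i).val + 1 < n)
    (hstep : ∀ i : Fin m,
      σ i.succ = (Equiv.swap (pos i) ⟨(pos i).val + 1, hpos i⟩).trans (σ i.castSucc))
    (hpairs : ∀ a b : Fin n, a ≠ b →
      ∃! i : Fin m,
        ({σ i.castSucc (pos i), σ i.castSucc ⟨(pos i).val + 1, hpos i⟩} :
          Set (Fin n)) = {a, b}) (h1 : n - 1 < n) (h0 : 0 < n) :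
    σ (Fin.last _) ⟨n - 1, h1⟩ = σ 0 ⟨0, h0⟩ := by
  have hsymm : ∀ (i : Fin m) (a : Fin n),
      (σ i.succ).symm a
        = Equiv.swap (pos i) ⟨(pos i).val + 1, hpos i⟩ ((σ i.castSucc).symm a) := by
    intro i a
    rw [hstep i]
    simp
  set x : Fin n := σ 0 ⟨0, by omega⟩ with hx
  have hx0 : (σ 0).symm x = ⟨0, by omega⟩ := by rw [hx]; simp
  have key : ∀ y : Fin n, y ≠ x →
      ((σ (Fin.last m)).symm y).val < ((σ (Fin.last m)).symm x).val := by
    intro y hyx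
    obtain ⟨i0, hi0, hi0u⟩ := hpairs x y (Ne.symm hyx)
    have P0 : ((σ 0).symm x).val < ((σ 0).symm y).val := by
      have hne : ((σ 0).symm y).val ≠ 0 := by
        intro h
        apply hyx
        have : (σ 0).symm y = ⟨0, by omega⟩ := Fin.ext h
        rw [← hx0] at this
        exact (σ 0).symm.injective this
      rw [hx0]
      simpa using Nat.pos_of_ne_zero hne
    have main : ∀ j, (hj : j ≤ m) →
        (i0.val < j → ¬ (((σ ⟨j, by omega⟩).symm x).val < ((σ ⟨j, by omega⟩).symm y).val))
        ∧ (j ≤ i0.val → (((σ ⟨j, by omega⟩).symm x).val < ((σ ⟨j, by omega⟩).symm y).val)) := by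
      intro j
      induction j with
      | zero =>
        intro hj
        have h0 : (⟨0, by omega⟩ : Fin (m + 1)) = 0 := by ext; simp
        rw [h0]
        exact ⟨by omega, fun _ => P0⟩
      | succ j ih =>
        intro hj
        have hjm : j < m := by omega
        obtain ⟨IH1, IH2⟩ := ih (by omega)
        have hstep' : ∀ a : Fin n, ((σ ⟨j+1, by omega⟩).symm a)
            = Equiv.swap (pos ⟨j, hjm⟩) ⟨(pos ⟨j, hjm⟩).val + 1, hpos ⟨j, hjm⟩⟩
                ((σ ⟨j, by omega⟩).symm a) := fun a => hsymm ⟨j, hjm⟩ a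
        rw [hstep' x, hstep' y]
        have hqxy : ((σ ⟨j, by omega⟩).symm x) ≠ ((σ ⟨j, by omega⟩).symm y) :=
          fun h => hyx (((σ _).symm.injective h).symm)
        by_cases hii : (⟨j, hjm⟩ : Fin m) = i0
        · -- the swap of pair {x,y} happens here
          have hi0j : i0.val = j := by rw [← hii]
          have hset : ({σ (Fin.castSucc ⟨j, hjm⟩) (pos ⟨j, hjm⟩),
              σ (Fin.castSucc ⟨j, hjm⟩) ⟨(pos ⟨j, hjm⟩).val + 1, hpos ⟨j, hjm⟩⟩} :
                Set (Fin n)) = {x, y} := by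
            rw [hii]; exact hi0
          have hQ : ((σ ⟨j, by omega⟩).symm x).val < ((σ ⟨j, by omega⟩).symm y).val :=
            IH2 (by omega)
          rcases Set.pair_eq_pair_iff.mp hset with ⟨h1, h2⟩ | ⟨h1, h2⟩
          · have e1 : ((σ ⟨j, by omega⟩).symm x) = pos ⟨j, hjm⟩ := by
              rw [← h1]; exact Equiv.symm_apply_apply _ _
            have e2 : ((σ ⟨j, by omega⟩).symm y)
                = (⟨(pos ⟨j, hjm⟩).val + 1, hpos ⟨j, hjm⟩⟩ : Fin n) := by
              rw [← h2]; exact Equiv.symm_apply_apply _ _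
            rw [e1, e2, Equiv.swap_apply_left, Equiv.swap_apply_right]
            exact ⟨fun _ => by simp, fun h => by omega⟩
          · exfalso
            have e1 : ((σ ⟨j, by omega⟩).symm x)
                = (⟨(pos ⟨j, hjm⟩).val + 1, hpos ⟨j, hjm⟩⟩ : Fin n) := by
              rw [← h2]; exact Equiv.symm_apply_apply _ _
            have e2 : ((σ ⟨j, by omega⟩).symm y) = pos ⟨j, hjm⟩ := by
              rw [← h1]; exact Equiv.symm_apply_apply _ _
            rw [e1, e2] at hQ
            simp at hQ
        · -- not the swap of {x,y}: order preserved
          have hi0j : i0.val ≠ j := fun h => hii (Fin.ext h.symm)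
          have hsetne : ({σ (Fin.castSucc ⟨j, hjm⟩) (pos ⟨j, hjm⟩),
              σ (Fin.castSucc ⟨j, hjm⟩) ⟨(pos ⟨j, hjm⟩).val + 1, hpos ⟨j, hjm⟩⟩} :
                Set (Fin n)) ≠ {x, y} := fun h => hii (hi0u ⟨j, hjm⟩ h)
          have hbad : ¬ ((((σ ⟨j, by omega⟩).symm x) = pos ⟨j, hjm⟩
                ∧ ((σ ⟨j, by omega⟩).symm y) = (⟨(pos ⟨j, hjm⟩).val + 1, hpos ⟨j, hjm⟩⟩ : Fin n))
              ∨ (((σ ⟨j, by omega⟩).symm x) = (⟨(pos ⟨j, hjm⟩).val + 1, hpos ⟨j, hjm⟩⟩ : Fin n)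
                ∧ ((σ ⟨j, by omega⟩).symm y) = pos ⟨j, hjm⟩)) := by
            rintro (⟨e1, e2⟩ | ⟨e1, e2⟩)
            · apply hsetne
              have h1 : σ (Fin.castSucc ⟨j, hjm⟩) (pos ⟨j, hjm⟩) = x := by
                rw [← e1]; exact Equiv.apply_symm_apply _ _
              have h2 : σ (Fin.castSucc ⟨j, hjm⟩) ⟨(pos ⟨j, hjm⟩).val + 1, hpos ⟨j, hjm⟩⟩ = y := by
                rw [← e2]; exact Equiv.apply_symm_apply _ _
              rw [h1, h2]
            · apply hsetne
              have h1 : σ (Fin.castSucc ⟨j, hjm⟩) (pos ⟨j, hjm⟩) = y := by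
                rw [← e2]; exact Equiv.apply_symm_apply _ _
              have h2 : σ (Fin.castSucc ⟨j, hjm⟩) ⟨(pos ⟨j, hjm⟩).val + 1, hpos ⟨j, hjm⟩⟩ = x := by
                rw [← e1]; exact Equiv.apply_symm_apply _ _
              rw [h1, h2, Set.pair_comm]
          have hpres := swap_val_lt_iff (pos ⟨j, hjm⟩)
            (⟨(pos ⟨j, hjm⟩).val + 1, hpos ⟨j, hjm⟩⟩ : Fin n)
            ((σ ⟨j, by omega⟩).symm x) ((σ ⟨j, by omega⟩).symm y) rfl hqxy hbad
          rw [hpres]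
          exact ⟨fun hlt => IH1 (by omega), fun hle => IH2 (by omega)⟩
    have hlast : Fin.last m = (⟨m, by omega⟩ : Fin (m+1)) := rfl
    obtain ⟨M1, M2⟩ := main m le_rfl
    rw [hlast]
    have hi0m : i0.val < m := i0.isLt
    have hM := M1 hi0m
    have hvne : ((σ (⟨m, by omega⟩ : Fin (m+1))).symm x).val
        ≠ ((σ (⟨m, by omega⟩ : Fin (m+1))).symm y).val := by
      intro h
      exact hyx (((σ _).symm.injective (Fin.ext h)).symm)
    omega
  -- conclude: x sits at position n-1 in the last permutation
  have hq : (⟨n - 1, by omega⟩ : Fin n) = (σ (Fin.last m)).symm x := by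
    by_contra hne
    have hy : σ (Fin.last m) ⟨n - 1, by omega⟩ ≠ x := by
      intro h
      apply hne
      rw [← h]; simp
    have hlt := key _ hy
    simp only [Equiv.symm_apply_apply] at hlt
    have hpl : ((σ (Fin.last m)).symm x).val < n := Fin.isLt _
    omega
  rw [hq]
  exact (σ (Fin.last m)).apply_symm_apply x

theorem allowable_half_period_first_to_last (n : ℕ) (hn : 2 ≤ n)
    (σ : Fin (n.choose 2 + 1) → (Fin n ≃ Fin n))
    (pos : Fin (n.choose 2) → Fin n)
    (hpos : ∀ i, (pos i).val + 1 < n)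
    (hstep : ∀ i : Fin (n.choose 2),
      σ i.succ = (Equiv.swap (pos i) ⟨(pos i).val + 1, hpos i⟩).trans (σ i.castSucc))
    (hpairs : ∀ a b : Fin n, a ≠ b →
      ∃! i : Fin (n.choose 2),
        ({σ i.castSucc (pos i), σ i.castSucc ⟨(pos i).val + 1, hpos i⟩} :
          Set (Fin n)) = {a, b}) :
    σ (Fin.last _) ⟨n - 1, by omega⟩ = σ 0 ⟨0, by omega⟩ := by
  exact allowable_half_period_first_to_last_aux n (n.choose 2) hn σ pos hpos hstep hpairs (by omega) (by omega)
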